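/- For every real α > 0, the function f : ℤ₊² → ℝ defined by f(x, y) = gcd(x, y)^α is positive definite. -/

import Mathlib

open ArithmeticFunction Finset

/-- The arithmetic function `n ↦ n^α`. -/
noncomputable def powA (α : ℝ) : ArithmeticFunction ℝ :=
  ⟨fun n => if n = 0 then 0 else (n : ℝ) ^ α, by simp⟩

lemma powA_apply (α : ℝ) {n : ℕ} (hn : n ≠ 0) : powA α n = (n : ℝ) ^ α := if_neg hn

lemma powA_mult (α : ℝ) : (powA α).IsMultiplicative := by
  rw [ArithmeticFunction.IsMultiplicative.iff_ne_zero]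
  refine ⟨by simp [powA], fun {m n} hm hn _ => ?_⟩
  rw [powA_apply α hm, powA_apply α hn, powA_apply α (Nat.mul_ne_zero hm hn)]
  push_cast
  exact Real.mul_rpow (Nat.cast_nonneg m) (Nat.cast_nonneg n)

/-- Möbius transform of `n ↦ n^α`. -/
noncomputable def gA (α : ℝ) : ArithmeticFunction ℝ :=
  ((moebius : ArithmeticFunction ℤ) : ArithmeticFunction ℝ) * powA α

lemma gA_mult (α : ℝ) : (gA α).IsMultiplicative :=
  isMultiplicative_moebius.intCast.mul (powA_mult α)

lemma sum_gA (α : ℝ) {n : ℕ} (hn : n ≠ 0) :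
    ∑ d ∈ n.divisors, gA α d = (n : ℝ) ^ α := by
  have : (((zeta : ArithmeticFunction ℕ) : ArithmeticFunction ℝ) * gA α) n = powA α n := by
    rw [gA, ← mul_assoc, coe_zeta_mul_coe_moebius, one_mul]
  rwa [coe_zeta_mul_apply, powA_apply α hn] at this

lemma gA_prime_pow_nonneg {α : ℝ} (hα : 0 ≤ α) {p : ℕ} (hp : p.Prime) (k : ℕ) :
    0 ≤ gA α (p ^ k) := by
  rcases Nat.eq_zero_or_pos k with rfl | hk
  · simp [(gA_mult α).map_one]
  have hval : gA α (p ^ k) = ((p : ℝ) ^ k) ^ α - ((p : ℝ) ^ (k - 1)) ^ α := by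
    rw [gA, mul_apply]
    rw [Nat.sum_divisorsAntidiagonal
      (f := fun a b => (((moebius : ArithmeticFunction ℤ) : ArithmeticFunction ℝ)) a * powA α b)]
    rw [Nat.sum_divisors_prime_pow hp, Finset.sum_range_succ']
    have h0 : (((moebius : ArithmeticFunction ℤ) : ArithmeticFunction ℝ)) (p ^ 0) *
        powA α (p ^ k / p ^ 0) = ((p : ℝ) ^ k) ^ α := by
      simp only [pow_zero, Nat.div_one, intCoe_apply, moebius_apply_one, Int.cast_one, one_mul]
      rw [powA_apply α (pow_ne_zero k hp.pos.ne')]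
      push_cast
      ring_nf
    have h1 : ∀ i ∈ Finset.range k,
        (((moebius : ArithmeticFunction ℤ) : ArithmeticFunction ℝ)) (p ^ (i + 1)) *
          powA α (p ^ k / p ^ (i + 1)) =
        if i = 0 then -(((p : ℝ) ^ (k - 1)) ^ α) else 0 := by
      intro i hi
      rw [Finset.mem_range] at hi
      rw [intCoe_apply, moebius_apply_prime_pow hp (Nat.succ_ne_zero i)]
      rcases Nat.eq_zero_or_pos i with rfl | hipos
      · rw [Nat.pow_div (by omega) hp.pos,
          powA_apply α (pow_ne_zero _ hp.pos.ne')]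
        norm_num
      · rw [if_neg (by omega), if_neg (by omega)]
        push_cast
        ring
    rw [Finset.sum_congr rfl h1, Finset.sum_ite_eq' (Finset.range k) 0
      (fun _ => -(((p : ℝ) ^ (k - 1)) ^ α)), if_pos (Finset.mem_range.2 hk), h0]
    ring
  rw [hval, sub_nonneg]
  exact Real.rpow_le_rpow (by positivity)
    (by exact_mod_cast Nat.pow_le_pow_right hp.pos (by omega)) hα

lemma gA_nonneg {α : ℝ} (hα : 0 ≤ α) (n : ℕ) : 0 ≤ gA α n := by
  rcases Nat.eq_zero_or_pos n with rfl | hn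
  · simp
  rw [(gA_mult α).multiplicative_factorization _ hn.ne']
  exact Finset.prod_nonneg fun p hp =>
    gA_prime_pow_nonneg hα (Nat.prime_of_mem_primeFactors hp) _

/-- A bivariate arithmetic function `f : ℤ₊² → ℝ` (positive integers encoded as positive
natural numbers) is *positive definite* if for every finite nonempty set `S ⊆ ℤ₊²` the
matrix with entries `f(gcd(x₁,y₁), gcd(x₂,y₂))` for `(x₁,x₂), (y₁,y₂) ∈ S` is positive
semidefinite. -/
def IsPosDefArith2 (f : ℕ → ℕ → ℝ) : Prop :=
  ∀ S : Finset (ℕ × ℕ), S.Nonempty → (∀ p ∈ S, 0 < p.1 ∧ 0 < p.2) →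
    (Matrix.of fun x y : S =>
      f (Nat.gcd x.1.1 y.1.1) (Nat.gcd x.1.2 y.1.2)).PosSemidef

/-- For every real `α > 0`, the function `f(x, y) = gcd(x, y)^α` on
`ℤ₊²` is positive definite. -/
theorem gcd_rpow_isPosDefArith2 (α : ℝ) (hα : 0 < α) :
    IsPosDefArith2 (fun x y => (Nat.gcd x y : ℝ) ^ α) := by
  intro S hS hpos
  set N : ℕ := S.sup (fun p => p.1) with hN
  set G : S → S → ℕ := fun x y => Nat.gcd (Nat.gcd x.1.1 y.1.1) (Nat.gcd x.1.2 y.1.2) with hG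
  have hGpos : ∀ x y : S, 0 < G x y := by
    intro x y
    exact Nat.gcd_pos_of_pos_left _ (Nat.gcd_pos_of_pos_left _ (hpos _ x.2).1)
  have hGle : ∀ x y : S, G x y ≤ N := by
    intro x y
    have h1 : G x y ∣ x.1.1 := (Nat.gcd_dvd_left _ _).trans (Nat.gcd_dvd_left _ _)
    exact (Nat.le_of_dvd (hpos _ x.2).1 h1).trans (Finset.le_sup (f := fun p => p.1) x.2)
  -- indicator of divisibility
  set e : ℕ → S → ℝ := fun d x => if d ∣ x.1.1 ∧ d ∣ x.1.2 then 1 else 0 with he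
  have key : ∀ x y : S, (G x y : ℝ) ^ α =
      ∑ d ∈ Finset.Icc 1 N, gA α d * e d x * e d y := by
    intro x y
    have hdiv : (G x y).divisors = (Finset.Icc 1 N).filter (fun d => d ∣ G x y) := by
      ext d
      simp only [Nat.mem_divisors, Finset.mem_filter, Finset.mem_Icc]
      constructor
      · rintro ⟨hd, -⟩
        refine ⟨⟨?_, (Nat.le_of_dvd (hGpos x y) hd).trans (hGle x y)⟩, hd⟩
        rcases Nat.eq_zero_or_pos d with rfl | h
        · exact absurd (zero_dvd_iff.mp hd) (hGpos x y).ne'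
        · exact h
      · rintro ⟨-, hd⟩
        exact ⟨hd, (hGpos x y).ne'⟩
    rw [← sum_gA α (hGpos x y).ne', hdiv, Finset.sum_filter]
    refine Finset.sum_congr rfl fun d hd => ?_
    have hsplit : d ∣ G x y ↔ (d ∣ x.1.1 ∧ d ∣ x.1.2) ∧ (d ∣ y.1.1 ∧ d ∣ y.1.2) := by
      rw [hG]
      simp only [Nat.dvd_gcd_iff]
      tauto
    by_cases h1 : d ∣ x.1.1 ∧ d ∣ x.1.2 <;> by_cases h2 : d ∣ y.1.1 ∧ d ∣ y.1.2 <;>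
      simp [he, h1, h2, hsplit, mul_comm]
  rw [Matrix.posSemidef_iff_dotProduct_mulVec]
  constructor
  · -- Hermitian
    ext x y
    simp only [Matrix.conjTranspose_apply, Matrix.of_apply, star_trivial]
    rw [Nat.gcd_comm x.1.1 y.1.1, Nat.gcd_comm x.1.2 y.1.2]
  · intro v
    have h0 : (0:ℝ) ≤ ∑ d ∈ Finset.Icc 1 N, gA α d * (∑ x : S, e d x * v x) ^ 2 :=
      Finset.sum_nonneg fun d _ => mul_nonneg (gA_nonneg hα.le d) (sq_nonneg _)
    refine h0.trans (le_of_eq ?_)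
    simp only [dotProduct, Matrix.mulVec, Pi.star_apply, star_trivial, Matrix.of_apply]
    have expand : ∀ d : ℕ, gA α d * (∑ x : S, e d x * v x) ^ 2 =
        ∑ x : S, ∑ y : S, v x * (gA α d * e d x * e d y * v y) := by
      intro d
      rw [sq, Finset.sum_mul_sum, Finset.mul_sum]
      exact Finset.sum_congr rfl fun x _ => by
        rw [Finset.mul_sum]; exact Finset.sum_congr rfl fun y _ => by ring
    rw [Finset.sum_congr rfl fun d _ => expand d, Finset.sum_comm]
    refine Finset.sum_congr rfl fun x _ => ?_
    rw [Finset.sum_comm, Finset.mul_sum]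
    refine Finset.sum_congr rfl fun y _ => ?_
    have k2 := key x y
    simp only [hG] at k2
    rw [k2, Finset.sum_mul, Finset.mul_sum]
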